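/- Suppose that for every stage k < N the investment satisfies the modulation condition −((d_max − d(k))/((1 − d(k))·X_max))·V(k) ≤ I(k) ≤ ((d_max − d(k))/((1 − d(k))·|X_min|))·V(k), and that every realized return satisfies X_min ≤ X(k) ≤ X_max. Then survival is guaranteed: for every stage k = 0, 1, …, N one has V(k) ≥ (1 − d_max)·V_max(k) > 0; in particular V(k) > 0 for all k. -/

import Mathlib

/-- Running maximum `V_max(k) = max_{0 ≤ i ≤ k} V(i)` of the account value. -/
noncomputable def runMax (V : ℕ → ℝ) (k : ℕ) : ℝ :=
  (Finset.range (k + 1)).sup' Finset.nonempty_range_add_one V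

/-- Percentage drawdown `d(k) = (V_max(k) - V(k)) / V_max(k)`. -/
noncomputable def drawdown (V : ℕ → ℝ) (k : ℕ) : ℝ :=
  (runMax V k - V k) / runMax V k

lemma runMax_succ (V : ℕ → ℝ) (k : ℕ) :
    runMax V (k + 1) = max (V (k + 1)) (runMax V k) := by
  apply le_antisymm
  · refine Finset.sup'_le _ _ fun i hi => ?_
    rw [Finset.mem_range, Nat.lt_succ_iff] at hi
    rcases Nat.eq_or_lt_of_le hi with h | h
    · subst h; exact le_max_left _ _
    · exact le_trans (Finset.le_sup' V (Finset.mem_range.mpr h)) (le_max_right _ _)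
  · apply max_le
    · exact Finset.le_sup' V (Finset.self_mem_range_succ _)
    · exact Finset.sup'_le _ _ fun i hi => Finset.le_sup' V (by
        rw [Finset.mem_range] at hi ⊢; omega)

lemma le_runMax (V : ℕ → ℝ) (k : ℕ) : V k ≤ runMax V k :=
  Finset.le_sup' V (Finset.self_mem_range_succ k)

theorem drawdown_modulation_survival
    (N : ℕ) (V I X : ℕ → ℝ) (Xmin Xmax dmax : ℝ)
    (hXmin1 : -1 < Xmin) (hXmin0 : Xmin < 0) (hXmax : 0 < Xmax)
    (hdmax0 : 0 < dmax) (hdmax1 : dmax < 1)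
    (hV0 : 0 < V 0)
    (hrec : ∀ k, V (k + 1) = V k + I k * X k)
    (hX : ∀ k, Xmin ≤ X k ∧ X k ≤ Xmax)
    (hI : ∀ k < N,
      -((dmax - drawdown V k) / ((1 - drawdown V k) * Xmax)) * V k ≤ I k ∧
      I k ≤ ((dmax - drawdown V k) / ((1 - drawdown V k) * |Xmin|)) * V k) :
    ∀ k ≤ N, (1 - dmax) * runMax V k ≤ V k ∧ 0 < (1 - dmax) * runMax V k ∧ 0 < V k := by
  intro k
  induction k with
  | zero =>
    intro _
    have hM : runMax V 0 = V 0 := by unfold runMax; simp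
    rw [hM]
    refine ⟨by nlinarith, by nlinarith, hV0⟩
  | succ k ih =>
    intro hk
    have hk' : k ≤ N := Nat.le_of_succ_le hk
    obtain ⟨h1, h2, h3⟩ := ih hk'
    set M := runMax V k with hMdef
    have hMpos : 0 < M := by nlinarith
    set d := drawdown V k with hddef
    have hdval : d = (M - V k) / M := rfl
    obtain ⟨hIl, hIu⟩ := hI k (Nat.lt_of_succ_le hk)
    rw [← hddef] at hIl hIu
    clear_value M d
    have hVk : (1 - d) * M = V k := by
      rw [hdval]; field_simp; ring
    have hdle : d ≤ dmax := by
      rw [hdval, div_le_iff₀ hMpos]; nlinarith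
    have h1d : 0 < 1 - d := by nlinarith
    have hA : 0 ≤ (dmax - d) * M := by nlinarith
    obtain ⟨hXl, hXu⟩ := hX k
    have habs : |Xmin| = -Xmin := abs_of_neg hXmin0
    -- rewrite the investment bounds
    have hIl' : -((dmax - d) * M) ≤ I k * Xmax := by
      have : -((dmax - d) / ((1 - d) * Xmax)) * V k = -((dmax - d) * M) / Xmax := by
        rw [← hVk]; field_simp
      rw [this] at hIl
      calc -((dmax - d) * M) = -((dmax - d) * M) / Xmax * Xmax := by
            field_simp
        _ ≤ I k * Xmax := by
            apply mul_le_mul_of_nonneg_right hIl (le_of_lt hXmax)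
    have hIu' : -((dmax - d) * M) ≤ I k * Xmin := by
      have hb : I k ≤ (dmax - d) * M / (-Xmin) := by
        have : ((dmax - d) / ((1 - d) * |Xmin|)) * V k = (dmax - d) * M / (-Xmin) := by
          rw [← hVk, habs]; field_simp [hXmin0.ne, h1d.ne']
        rw [this] at hIu; exact hIu
      have hnXmin : 0 < -Xmin := by linarith
      have := mul_le_mul_of_nonneg_right hb (le_of_lt hnXmin)
      have h' : (dmax - d) * M / (-Xmin) * (-Xmin) = (dmax - d) * M := by
        field_simp [hXmin0.ne]
      nlinarith
    -- key step inequality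
    have hkey : -((dmax - d) * M) ≤ I k * X k := by
      rcases le_total 0 (I k) with hIpos | hIneg
      · nlinarith [mul_le_mul_of_nonneg_left hXl hIpos]
      · nlinarith [mul_le_mul_of_nonpos_left hXu hIneg]
    have hstep : (1 - dmax) * M ≤ V (k + 1) := by
      have he : (1 - dmax) * M = (1 - d) * M - (dmax - d) * M := by ring
      rw [hrec k]; linarith
    have hVk1pos : 0 < V (k + 1) := by linarith
    rw [runMax_succ, ← hMdef]
    rcases le_total (V (k + 1)) M with hle | hle
    · rw [max_eq_right hle]
      exact ⟨hstep, h2, hVk1pos⟩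
    · rw [max_eq_left hle]
      have hp : 0 < (1 - dmax) * V (k + 1) := mul_pos (by linarith) hVk1pos
      have hq : 0 < dmax * V (k + 1) := mul_pos hdmax0 hVk1pos
      exact ⟨by rw [sub_mul, one_mul]; linarith [hq], hp, hVk1pos⟩
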